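/- Let N1, N2 be positive integers, L = {1,…,N1}×{1,…,N2}, and L_var ⊆ L. Let α : Fin N1 → ℕ, β : Fin N2 → ℕ, and γ : L_var → ℤ. If there exists a family of real numbers n(l1,l2) ≥ 0 for (l1,l2) ∈ L satisfying (i) ∑_{l2} n(l1,l2) = α(l1) for all l1, (ii) ∑_{l1} n(l1,l2) ≤ β(l2) for all l2, and (iii) n(l1,l2) = γ(l1,l2) for all (l1,l2) ∈ L_var, then there exists a family of integers n'(l1,l2) satisfying the same constraints (i)–(iii) with n'(l1,l2) ≥ 0. -/

import Mathlib

/-- **Lemma 1 (integrality lemma).** If the transportation-type system with row sums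
equal to `α`, column sums at most `β`, fixed integer values `γ` on `Lvar`, and
nonnegativity has a real solution, then it has an integer solution. -/
theorem integrality_lemma (N1 N2 : ℕ) (hN1 : 0 < N1) (hN2 : 0 < N2)
    (Lvar : Set (Fin N1 × Fin N2)) (α : Fin N1 → ℕ) (β : Fin N2 → ℕ)
    (γ : Fin N1 × Fin N2 → ℤ)
    (h : ∃ n : Fin N1 → Fin N2 → ℝ,
      (∀ l1 l2, 0 ≤ n l1 l2) ∧
      (∀ l1, ∑ l2, n l1 l2 = (α l1 : ℝ)) ∧
      (∀ l2, ∑ l1, n l1 l2 ≤ (β l2 : ℝ)) ∧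
      (∀ l1 l2, (l1, l2) ∈ Lvar → n l1 l2 = (γ (l1, l2) : ℝ))) :
    ∃ n' : Fin N1 → Fin N2 → ℤ,
      (∀ l1 l2, 0 ≤ n' l1 l2) ∧
      (∀ l1, ∑ l2, n' l1 l2 = (α l1 : ℤ)) ∧
      (∀ l2, ∑ l1, n' l1 l2 ≤ (β l2 : ℤ)) ∧
      (∀ l1 l2, (l1, l2) ∈ Lvar → n' l1 l2 = γ (l1, l2)) := by
  classical
  obtain ⟨n, hpos, hrow, hcol, hfix⟩ := h
  -- fixed row/column sums (integers)
  set FR : Fin N1 → ℤ := fun l1 => ∑ l2, if (l1, l2) ∈ Lvar then γ (l1, l2) else 0 with hFR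
  set FC : Fin N2 → ℤ := fun l2 => ∑ l1, if (l1, l2) ∈ Lvar then γ (l1, l2) else 0 with hFC
  -- real values of fixed sums
  have hFRr : ∀ l1, ((FR l1 : ℝ)) = ∑ l2, (if (l1, l2) ∈ Lvar then n l1 l2 else 0) := by
    intro l1
    rw [hFR]
    push_cast
    refine Finset.sum_congr rfl fun l2 _ => ?_
    by_cases hm : (l1, l2) ∈ Lvar
    · simp [hm, hfix l1 l2 hm]
    · simp [hm]
  have hFCr : ∀ l2, ((FC l2 : ℝ)) = ∑ l1, (if (l1, l2) ∈ Lvar then n l1 l2 else 0) := by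
    intro l2
    rw [hFC]
    push_cast
    refine Finset.sum_congr rfl fun l1 _ => ?_
    by_cases hm : (l1, l2) ∈ Lvar
    · simp [hm, hfix l1 l2 hm]
    · simp [hm]
  -- free parts of the row sums
  have hfreeRow : ∀ l1, ∑ l2, (if (l1, l2) ∈ Lvar then 0 else n l1 l2)
      = (α l1 : ℝ) - FR l1 := by
    intro l1
    rw [hFRr l1, ← hrow l1, ← Finset.sum_sub_distrib]
    refine Finset.sum_congr rfl fun l2 _ => ?_
    by_cases hm : (l1, l2) ∈ Lvar <;> simp [hm]
  have hfreeColle : ∀ l2, ∑ l1, (if (l1, l2) ∈ Lvar then 0 else n l1 l2)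
      ≤ (β l2 : ℝ) - FC l2 := by
    intro l2
    have heq : ∑ l1, (if (l1, l2) ∈ Lvar then 0 else n l1 l2)
        = (∑ l1, n l1 l2) - FC l2 := by
      rw [hFCr l2, ← Finset.sum_sub_distrib]
      refine Finset.sum_congr rfl fun l1 _ => ?_
      by_cases hm : (l1, l2) ∈ Lvar <;> simp [hm]
    rw [heq]
    linarith [hcol l2]
  have hfnn : ∀ l1 l2, (0 : ℝ) ≤ (if (l1, l2) ∈ Lvar then 0 else n l1 l2) := by
    intro l1 l2
    by_cases hm : (l1, l2) ∈ Lvar <;> simp [hm, hpos l1 l2]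
  -- integer free row sums `a` and free column capacities `b`
  have haZ : ∀ l1, 0 ≤ (α l1 : ℤ) - FR l1 := by
    intro l1
    have : (0 : ℝ) ≤ (α l1 : ℝ) - FR l1 := by
      rw [← hfreeRow l1]; exact Finset.sum_nonneg fun l2 _ => hfnn l1 l2
    exact_mod_cast this
  have hbZ : ∀ l2, 0 ≤ (β l2 : ℤ) - FC l2 := by
    intro l2
    have : (0 : ℝ) ≤ (β l2 : ℝ) - FC l2 :=
      le_trans (Finset.sum_nonneg fun l1 _ => hfnn l1 l2) (hfreeColle l2)
    exact_mod_cast this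
  set a : Fin N1 → ℕ := fun l1 => ((α l1 : ℤ) - FR l1).toNat with ha
  set b : Fin N2 → ℕ := fun l2 => ((β l2 : ℤ) - FC l2).toNat with hb
  have haI : ∀ l1, (a l1 : ℤ) = (α l1 : ℤ) - FR l1 := fun l1 => Int.toNat_of_nonneg (haZ l1)
  have hbI : ∀ l2, (b l2 : ℤ) = (β l2 : ℤ) - FC l2 := fun l2 => Int.toNat_of_nonneg (hbZ l2)
  have haR : ∀ l1, (a l1 : ℝ) = ∑ l2, (if (l1, l2) ∈ Lvar then 0 else n l1 l2) := by
    intro l1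
    rw [hfreeRow l1]
    have := haI l1
    have : ((a l1 : ℤ) : ℝ) = (((α l1 : ℤ) - FR l1 : ℤ) : ℝ) := by rw [this]
    push_cast at this
    exact_mod_cast this
  have hbR : ∀ l2, ∑ l1, (if (l1, l2) ∈ Lvar then 0 else n l1 l2) ≤ (b l2 : ℝ) := by
    intro l2
    have h1 : ((b l2 : ℤ) : ℝ) = (((β l2 : ℤ) - FC l2 : ℤ) : ℝ) := by rw [hbI]
    push_cast at h1
    rw [show ((b l2 : ℕ) : ℝ) = (((b l2 : ℕ) : ℤ) : ℝ) by push_cast; ring, hbI]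
    push_cast
    exact hfreeColle l2
  -- Hall's theorem setup
  set t : (Σ l1 : Fin N1, Fin (a l1)) → Finset (Σ l2 : Fin N2, Fin (b l2)) :=
    fun i => Finset.univ.filter fun j => (i.1, j.1) ∉ Lvar with ht
  have hall : ∀ S : Finset (Σ l1 : Fin N1, Fin (a l1)), S.card ≤ (S.biUnion t).card := by
    intro S
    set R : Finset (Fin N1) := S.image Sigma.fst with hR
    set NR : Finset (Fin N2) := Finset.univ.filter fun l2 => ∃ l1 ∈ R, (l1, l2) ∉ Lvar with hNR
    have h1 : S.card ≤ ∑ l1 ∈ R, a l1 := by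
      have hsub : S ⊆ R.sigma fun l1 => (Finset.univ : Finset (Fin (a l1))) := by
        intro i hi
        rw [Finset.mem_sigma]
        exact ⟨Finset.mem_image_of_mem _ hi, Finset.mem_univ _⟩
      calc S.card ≤ (R.sigma fun l1 => (Finset.univ : Finset (Fin (a l1)))).card :=
            Finset.card_le_card hsub
        _ = ∑ l1 ∈ R, a l1 := by rw [Finset.card_sigma]; simp
    have h2 : ∑ l1 ∈ R, a l1 ≤ ∑ l2 ∈ NR, b l2 := by
      have e1 : ∑ l1 ∈ R, (a l1 : ℝ)
          = ∑ l1 ∈ R, ∑ l2, (if (l1, l2) ∈ Lvar then 0 else n l1 l2) :=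
        Finset.sum_congr rfl fun l1 _ => haR l1
      have e2 : ∑ l1 ∈ R, ∑ l2, (if (l1, l2) ∈ Lvar then 0 else n l1 l2)
          = ∑ l1 ∈ R, ∑ l2 ∈ NR, (if (l1, l2) ∈ Lvar then 0 else n l1 l2) := by
        refine Finset.sum_congr rfl fun l1 hl1 => ?_
        refine (Finset.sum_subset (Finset.subset_univ NR) ?_).symm
        intro l2 _ hl2
        have hmem : (l1, l2) ∈ Lvar := by
          by_contra hc
          apply hl2
          rw [hNR, Finset.mem_filter]
          exact ⟨Finset.mem_univ _, l1, hl1, hc⟩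
        rw [if_pos hmem]
      have e3 : ∑ l1 ∈ R, ∑ l2 ∈ NR, (if (l1, l2) ∈ Lvar then 0 else n l1 l2)
          = ∑ l2 ∈ NR, ∑ l1 ∈ R, (if (l1, l2) ∈ Lvar then 0 else n l1 l2) :=
        Finset.sum_comm
      have e4 : ∑ l2 ∈ NR, ∑ l1 ∈ R, (if (l1, l2) ∈ Lvar then 0 else n l1 l2)
          ≤ ∑ l2 ∈ NR, ∑ l1, (if (l1, l2) ∈ Lvar then 0 else n l1 l2) := by
        refine Finset.sum_le_sum fun l2 _ => ?_
        exact Finset.sum_le_sum_of_subset_of_nonneg (Finset.subset_univ R)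
          fun l1 _ _ => hfnn l1 l2
      have e5 : ∑ l2 ∈ NR, ∑ l1, (if (l1, l2) ∈ Lvar then 0 else n l1 l2)
          ≤ ∑ l2 ∈ NR, (b l2 : ℝ) := Finset.sum_le_sum fun l2 _ => hbR l2
      have hreal : (∑ l1 ∈ R, (a l1 : ℝ)) ≤ ∑ l2 ∈ NR, (b l2 : ℝ) := by
        rw [e1, e2, e3]; exact le_trans e4 e5
      exact_mod_cast hreal
    have h3 : ∑ l2 ∈ NR, b l2 ≤ (S.biUnion t).card := by
      have hsub : (NR.sigma fun l2 => (Finset.univ : Finset (Fin (b l2)))) ⊆ S.biUnion t := by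
        intro j hj
        rw [Finset.mem_sigma] at hj
        obtain ⟨hj1, -⟩ := hj
        rw [hNR, Finset.mem_filter] at hj1
        obtain ⟨-, l1, hl1R, hfree⟩ := hj1
        rw [hR, Finset.mem_image] at hl1R
        obtain ⟨i, hiS, rfl⟩ := hl1R
        rw [Finset.mem_biUnion]
        refine ⟨i, hiS, ?_⟩
        rw [ht]
        simp only [Finset.mem_filter]
        exact ⟨Finset.mem_univ _, hfree⟩
      calc ∑ l2 ∈ NR, b l2
          = (NR.sigma fun l2 => (Finset.univ : Finset (Fin (b l2)))).card := by
            rw [Finset.card_sigma]; simp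
        _ ≤ (S.biUnion t).card := Finset.card_le_card hsub
    exact h1.trans (h2.trans h3)
  obtain ⟨f, hfinj, hft⟩ := (Finset.all_card_le_biUnion_card_iff_exists_injective t).mp hall
  -- the integer free solution
  set m : Fin N1 → Fin N2 → ℕ :=
    fun l1 l2 => (Finset.univ.filter fun k : Fin (a l1) => (f ⟨l1, k⟩).1 = l2).card with hm
  have hm_fix : ∀ l1 l2, (l1, l2) ∈ Lvar → m l1 l2 = 0 := by
    intro l1 l2 hmem
    rw [hm]
    simp only [Finset.card_eq_zero, Finset.filter_eq_empty_iff]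
    intro k _
    intro heq
    have := hft ⟨l1, k⟩
    rw [ht] at this
    simp only [Finset.mem_filter] at this
    exact this.2 (heq ▸ hmem)
  have hm_row : ∀ l1, ∑ l2, m l1 l2 = a l1 := by
    intro l1
    have := Finset.card_eq_sum_card_fiberwise
      (f := fun k : Fin (a l1) => (f ⟨l1, k⟩).1)
      (s := Finset.univ) (t := Finset.univ) (fun x _ => Finset.mem_univ _)
    simp only [Finset.card_univ, Fintype.card_fin] at this
    rw [hm]
    exact this.symm
  have hm_col : ∀ l2, ∑ l1, m l1 l2 ≤ b l2 := by
    intro l2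
    have h1 : ∑ l1, m l1 l2
        = (Finset.univ.filter fun i : Σ l1 : Fin N1, Fin (a l1) => (f i).1 = l2).card := by
      rw [Finset.card_filter, ← Finset.univ_sigma_univ, Finset.sum_sigma]
      rw [hm]
      refine Finset.sum_congr rfl fun l1 _ => ?_
      simp only [Finset.card_filter]
    have h2 : (Finset.univ.filter fun j : Σ l2' : Fin N2, Fin (b l2') => j.1 = l2).card
        = b l2 := by
      rw [Finset.card_filter, ← Finset.univ_sigma_univ, Finset.sum_sigma]
      simp [apply_ite Finset.card]
    rw [h1, ← h2]
    refine Finset.card_le_card_of_injOn f ?_ (hfinj.injOn)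
    intro i hi
    simp only [Finset.mem_coe, Finset.mem_filter] at hi ⊢
    exact ⟨Finset.mem_univ _, hi.2⟩
  -- nonnegativity of γ on Lvar
  have hγnn : ∀ l1 l2, (l1, l2) ∈ Lvar → 0 ≤ γ (l1, l2) := by
    intro l1 l2 hmem
    have : (0 : ℝ) ≤ (γ (l1, l2) : ℝ) := (hfix l1 l2 hmem) ▸ hpos l1 l2
    exact_mod_cast this
  -- assemble the integer solution
  refine ⟨fun l1 l2 => if (l1, l2) ∈ Lvar then γ (l1, l2) else (m l1 l2 : ℤ), ?_, ?_, ?_, ?_⟩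
  · intro l1 l2
    by_cases hmem : (l1, l2) ∈ Lvar
    · simp only [hmem, if_pos]
      exact hγnn l1 l2 hmem
    · simp [hmem]
  · intro l1
    have hsplit : ∑ l2, (if (l1, l2) ∈ Lvar then γ (l1, l2) else (m l1 l2 : ℤ))
        = FR l1 + ∑ l2, (m l1 l2 : ℤ) := by
      rw [hFR, ← Finset.sum_add_distrib]
      refine Finset.sum_congr rfl fun l2 _ => ?_
      by_cases hmem : (l1, l2) ∈ Lvar
      · simp [hmem, hm_fix l1 l2 hmem]
      · simp [hmem]
    rw [hsplit]
    have hsum : ∑ l2, (m l1 l2 : ℤ) = (a l1 : ℤ) := by exact_mod_cast hm_row l1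
    rw [hsum, haI l1]
    ring
  · intro l2
    have hsplit : ∑ l1, (if (l1, l2) ∈ Lvar then γ (l1, l2) else (m l1 l2 : ℤ))
        = FC l2 + ∑ l1, (m l1 l2 : ℤ) := by
      rw [hFC, ← Finset.sum_add_distrib]
      refine Finset.sum_congr rfl fun l1 _ => ?_
      by_cases hmem : (l1, l2) ∈ Lvar
      · simp [hmem, hm_fix l1 l2 hmem]
      · simp [hmem]
    rw [hsplit]
    have hle : ∑ l1, (m l1 l2 : ℤ) ≤ (b l2 : ℤ) := by exact_mod_cast hm_col l2
    have := hbI l2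
    omega
  · intro l1 l2 hmem
    simp [hmem]
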